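/- Let m be an odd positive integer, F = 𝔽_{2^m}, and let f : F → F be crooked. Then the crooked graph G_f is an antipodal distance-regular graph of diameter 3 with intersection array {2^{m+1} − 1, 2^{m+1} − 2, 1; 1, 2, 2^{m+1} − 1}: for any two vertices u, v at graph distance k (0 ≤ k ≤ 3), the number of neighbours of v at distance k+1 from u is b_k and the number at distance k−1 from u is c_k, where (b_0, b_1, b_2) = (2^{m+1}−1, 2^{m+1}−2, 1) and (c_1, c_2, c_3) = (1, 2, 2^{m+1}−1); moreover the relation 'equal or at distance 3' is an equivalence relation on the vertices. -/

import Mathlib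

/-- `f` is crooked: `f 0 = 0`; `f x + f y + f z ≠ f (x+y+z)` for pairwise
distinct `x, y, z`; and `f x + f y + f z ≠ f (x+a) + f (y+a) + f (z+a)`
for every `a ≠ 0`. -/
def IsCrooked {F : Type*} [Field F] (f : F → F) : Prop :=
  f 0 = 0 ∧
  (∀ x y z : F, x ≠ y → x ≠ z → y ≠ z → f x + f y + f z ≠ f (x + y + z)) ∧
  (∀ x y z a : F, a ≠ 0 → f x + f y + f z ≠ f (x + a) + f (y + a) + f (z + a))

/-- The crooked graph `G_f` on `F × 𝔽₂ × F`: distinct vertices `(a, i, α)` and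
`(b, j, β)` are adjacent iff `α + β = f (a+b) + (i+j+1)•(f a + f b)`, where the
scalar `i + j + 1 ∈ 𝔽₂` acts through its representative in `{0, 1} ⊆ ℕ`. -/
def crookedGraph {F : Type*} [Field F] (f : F → F) :
    SimpleGraph (F × ZMod 2 × F) :=
  SimpleGraph.fromRel fun u v =>
    u.2.2 + v.2.2 = f (u.1 + v.1) + (u.2.1 + v.2.1 + 1).val • (f u.1 + f v.1)

namespace CrookedAux

variable {F : Type*} [Field F] {f : F → F}

lemma zmod2_cases : ∀ i j : ZMod 2, (i = j ∧ (j+i+1).val = 1) ∨ (i ≠ j ∧ (j+i+1).val = 0) := by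
  decide

/-- The value of the third coordinate of the neighbour of `v` in class `(c,k)`. -/
def nbrVal (f : F → F) (v : F × ZMod 2 × F) (c : F) (k : ZMod 2) : F :=
  if k = v.2.1 then v.2.2 + f (v.1 + c) + f v.1 + f c else v.2.2 + f (v.1 + c)

lemma adj_iff (h2 : (2:F) = 0) (hf0 : f 0 = 0) (v : F × ZMod 2 × F) (c : F) (k : ZMod 2)
    (γ : F) :
    (crookedGraph f).Adj v (c, k, γ) ↔ ((c, k) ≠ (v.1, v.2.1) ∧ γ = nbrVal f v c k) := by
  obtain ⟨b, j, β⟩ := v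
  rw [crookedGraph, SimpleGraph.fromRel_adj]
  have hsym : ∀ (p q : F × ZMod 2 × F),
      (p.2.2 + q.2.2 = f (p.1 + q.1) + (p.2.1 + q.2.1 + 1).val • (f p.1 + f q.1)) ↔
      (q.2.2 + p.2.2 = f (q.1 + p.1) + (q.2.1 + p.2.1 + 1).val • (f q.1 + f p.1)) := by
    intro p q
    rw [add_comm p.2.2, add_comm p.1, add_comm p.2.1, add_comm (f p.1)]
  rw [or_iff_left_of_imp (fun h => (hsym _ _).mpr h)]
  dsimp only [nbrVal]
  rcases zmod2_cases k j with ⟨hk, hval⟩ | ⟨hk, hval⟩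
  · subst hk
    rw [hval, one_smul, if_pos rfl]
    constructor
    · rintro ⟨hne, heq⟩
      have hg : γ = β + f (b + c) + f b + f c := by linear_combination heq - β * h2
      have hcb : c ≠ b := by
        rintro rfl
        have hcc : c + c = 0 := by linear_combination c * h2
        rw [hcc, hf0] at hg
        have : β = γ := by linear_combination - hg - f c * h2
        exact hne (by rw [this])
      refine ⟨fun h => hcb (congrArg Prod.fst h), hg⟩
    · rintro ⟨hne, hg⟩
      have hcb : b ≠ c := fun h => hne (by rw [h])
      refine ⟨fun h => hcb (congrArg Prod.fst h), by linear_combination hg + β * h2⟩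
  · rw [if_neg hk, hval, zero_smul, add_zero]
    have hjk : j ≠ k := fun h => hk h.symm
    constructor
    · rintro ⟨hne, heq⟩
      refine ⟨fun h => hjk ?_, by linear_combination heq - β * h2⟩
      exact (congrArg Prod.snd h).symm
    · rintro ⟨hne, hg⟩
      refine ⟨fun h => hjk ?_, by linear_combination hg + β * h2⟩
      exact congrArg (Prod.fst ∘ Prod.snd) h
lemma f_inj (h2 : (2:F) = 0) (hf : IsCrooked f) : Function.Injective f := by
  intro x y hxy
  by_contra hne
  have ha : x + y ≠ 0 := fun h => hne (by linear_combination h - y * h2)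
  have := hf.2.2 x x x (x + y) ha
  apply this
  have hx : x + (x + y) = y := by linear_combination x * h2
  rw [hx]
  linear_combination 3 * hxy

lemma g_inj (h2 : (2:F) = 0) (hf : IsCrooked f) (a b : F) :
    Function.Injective (fun c => f (a + c) + f (b + c) + f c) := by
  intro c c' h
  by_contra hne
  have hs : c + c' ≠ 0 := fun h0 => hne (by linear_combination h0 - c' * h2)
  have key := hf.2.2 (a + c) (b + c) c (c + c') hs
  apply key
  have h1 : a + c + (c + c') = a + c' := by linear_combination c * h2
  have h2' : b + c + (c + c') = b + c' := by linear_combination c * h2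
  have h3 : c + (c + c') = c' := by linear_combination c * h2
  rw [h1, h2', h3]
  simpa using h

/-- fibers of `c ↦ f (a+c) + f (b+c)` are `{c, c + (a+b)}` for `a ≠ b`. -/
lemma phi_fiber (h2 : (2:F) = 0) (hf : IsCrooked f) {a b : F} (hab : a ≠ b) {c c' : F}
    (h : f (a + c) + f (b + c) = f (a + c') + f (b + c')) : c' = c ∨ c' = c + (a + b) := by
  by_contra hcon
  push_neg at hcon
  obtain ⟨hne, hne2⟩ := hcon
  have hxy : a + c ≠ b + c := fun h0 => hab (by linear_combination h0)
  have hxs : a + c ≠ a + c' := fun h0 => hne (by linear_combination - h0)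
  have hys : b + c ≠ a + c' := fun h0 => hne2 (by linear_combination - h0 - a * h2)
  have key := hf.2.1 (a + c) (a + c') (b + c) hxs hxy (Ne.symm hys)
  have harg : a + c + (a + c') + (b + c) = b + c' := by linear_combination (a + c) * h2
  rw [harg] at key
  exact key (by linear_combination h + f (a + c') * h2)

lemma phi_shift (h2 : (2:F) = 0) (a b c : F) :
    f (a + (c + (a + b))) + f (b + (c + (a + b))) = f (a + c) + f (b + c) := by
  have h1 : a + (c + (a + b)) = b + c := by linear_combination a * h2
  have h3 : b + (c + (a + b)) = a + c := by linear_combination b * h2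
  rw [h1, h3, add_comm]

lemma phi_sumfree (h2 : (2:F) = 0) (hf : IsCrooked f) {a b : F} (hab : a ≠ b) (c1 c2 c3 : F) :
    (f (a + c1) + f (b + c1)) + (f (a + c2) + f (b + c2)) ≠ f (a + c3) + f (b + c3) := by
  intro h
  have he : a + b ≠ 0 := fun h0 => hab (by linear_combination h0 - b * h2)
  have key := hf.2.2 (a + c1) (a + c2) (a + c3) (a + b) he
  have e1 : a + c1 + (a + b) = b + c1 := by linear_combination a * h2
  have e2 : a + c2 + (a + b) = b + c2 := by linear_combination a * h2
  have e3 : a + c3 + (a + b) = b + c3 := by linear_combination a * h2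
  rw [e1, e2, e3] at key
  exact key (by linear_combination h + (f (a + c3) - f (b + c1) - f (b + c2)) * h2)

lemma phi_partition [Fintype F] [DecidableEq F] (h2 : (2:F) = 0) (hf : IsCrooked f)
    {m : ℕ} (hcard : Fintype.card F = 2 ^ m) {a b : F} (hab : a ≠ b) {s₀ : F}
    (hs : ∃ c, f (a + c) + f (b + c) = s₀) (t : F) :
    (∃ c, f (a + c) + f (b + c) = t) ↔ ¬ (∃ c, f (a + c) + f (b + c) = t + s₀) := by
  have hm : 0 < m := by
    rcases Nat.eq_zero_or_pos m with h | h
    · have h1 := Fintype.one_lt_card (α := F)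
      rw [h, pow_zero] at hcard
      omega
    · exact h
  set φ : F → F := fun c => f (a + c) + f (b + c) with hφ
  set S : Finset F := Finset.univ.image φ with hS
  have habne : a + b ≠ 0 := fun h0 => hab (by linear_combination h0 - b * h2)
  have hfib2 : ∀ u ∈ S, (Finset.univ.filter (fun c => φ c = u)).card = 2 := by
    intro u hu
    obtain ⟨c, -, hc⟩ := Finset.mem_image.mp hu
    have hfil : Finset.univ.filter (fun c' => φ c' = u) = {c, c + (a + b)} := by
      ext c'
      simp only [Finset.mem_filter, Finset.mem_univ, true_and, Finset.mem_insert,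
        Finset.mem_singleton]
      constructor
      · intro h
        exact phi_fiber h2 hf hab (show φ c = φ c' by rw [hc, h])
      · rintro (rfl | rfl)
        · exact hc
        · rw [← hc]; exact phi_shift h2 a b c
    rw [hfil, Finset.card_insert_of_notMem (by
      simp only [Finset.mem_singleton]
      intro h0
      exact habne (by linear_combination - h0)), Finset.card_singleton]
  have hsum : Fintype.card F = 2 * S.card := by
    rw [← Finset.card_univ, Finset.card_eq_sum_card_image φ Finset.univ,
      Finset.sum_congr rfl hfib2, Finset.sum_const, smul_eq_mul, mul_comm]
  obtain ⟨c₀, hc₀⟩ := hs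
  have hs₀S : s₀ ∈ S := Finset.mem_image.mpr ⟨c₀, Finset.mem_univ _, hc₀⟩
  have hdisj : Disjoint S (S.image (· + s₀)) := by
    rw [Finset.disjoint_left]
    intro x hx hx'
    obtain ⟨y, hy, rfl⟩ := Finset.mem_image.mp hx'
    obtain ⟨cy, -, hcy⟩ := Finset.mem_image.mp hy
    obtain ⟨cx, -, hcx⟩ := Finset.mem_image.mp hx
    have hφc₀ : φ c₀ = s₀ := hc₀
    exact phi_sumfree h2 hf hab cy c₀ cx
      (show φ cy + φ c₀ = φ cx by rw [hcy, hφc₀, hcx])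
  have himgcard : (S.image (· + s₀)).card = S.card :=
    Finset.card_image_of_injective _ (add_left_injective s₀)
  have huniv : S ∪ S.image (· + s₀) = Finset.univ := by
    apply Finset.eq_univ_of_card
    rw [Finset.card_union_of_disjoint hdisj, himgcard, hsum]
    omega
  have hmem : ∀ u : F, (∃ c, f (a + c) + f (b + c) = u) ↔ u ∈ S := by
    intro u
    constructor
    · rintro ⟨c, hc⟩; exact Finset.mem_image.mpr ⟨c, Finset.mem_univ _, hc⟩
    · intro hu; obtain ⟨c, -, hc⟩ := Finset.mem_image.mp hu; exact ⟨c, hc⟩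
  rw [hmem, hmem]
  constructor
  · intro htS htS'
    exact Finset.disjoint_left.mp hdisj htS
      (Finset.mem_image.mpr ⟨t + s₀, htS', by linear_combination s₀ * h2⟩)
  · intro hnot
    have : t ∈ S ∪ S.image (· + s₀) := huniv ▸ Finset.mem_univ t
    rcases Finset.mem_union.mp this with h | h
    · exact h
    · exfalso
      obtain ⟨y, hy, hyt⟩ := Finset.mem_image.mp h
      exact hnot (by rw [show t + s₀ = y by linear_combination - hyt + s₀ * h2]; exact hy)


lemma zmod2_resolve : ∀ {k i : ZMod 2}, k ≠ i → k = i + 1 := by decide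
lemma zmod2_succ_ne : ∀ i : ZMod 2, i + 1 ≠ i := by decide
lemma zmod2_or : ∀ {i j k : ZMod 2}, i ≠ j → k = i ∨ k = j := by decide

/-- Common neighbours. -/
def CN (f : F → F) (u v : F × ZMod 2 × F) : Set (F × ZMod 2 × F) :=
  {w | (crookedGraph f).Adj u w ∧ (crookedGraph f).Adj v w}

lemma adj_of_eq (h2 : (2:F) = 0) (hf0 : f 0 = 0) {v : F × ZMod 2 × F} {c : F} {k : ZMod 2}
    {γ : F} (hck : (c, k) ≠ (v.1, v.2.1)) (hγ : γ = nbrVal f v c k) :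
    (crookedGraph f).Adj v (c, k, γ) := (adj_iff h2 hf0 v c k γ).mpr ⟨hck, hγ⟩

lemma CN_classmates (h2 : (2:F) = 0) (hf0 : f 0 = 0) {u v : F × ZMod 2 × F}
    (h1 : u.1 = v.1) (h21 : u.2.1 = v.2.1) (hne : u ≠ v) : CN f u v = ∅ := by
  obtain ⟨a, i, α⟩ := u
  obtain ⟨b, j, β⟩ := v
  simp only at h1 h21
  subst h1; subst h21
  have hαβ : α ≠ β := fun h => hne (by rw [h])
  ext ⟨c, k, γ⟩
  simp only [CN, Set.mem_setOf_eq, Set.mem_empty_iff_false, iff_false, not_and]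
  intro hu hv
  rw [adj_iff h2 hf0] at hu hv
  apply hαβ
  have h1 := hu.2
  have h2' := hv.2
  rw [h2'] at h1
  unfold nbrVal at h1
  by_cases hk : k = (a, i, α).2.1
  · rw [if_pos hk, if_pos hk] at h1
    dsimp at h1
    linear_combination - h1
  · rw [if_neg hk, if_neg hk] at h1
    dsimp at h1
    linear_combination - h1

lemma CN_adj (h2 : (2:F) = 0) (hf : IsCrooked f) {u v : F × ZMod 2 × F}
    (hadj : (crookedGraph f).Adj u v) : CN f u v = ∅ := by
  have hf0 := hf.1
  obtain ⟨a, i, α⟩ := u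
  obtain ⟨b, j, β⟩ := v
  rw [adj_iff h2 hf0] at hadj
  obtain ⟨hbj, hβ⟩ := hadj
  ext ⟨c, k, γ⟩
  simp only [CN, Set.mem_setOf_eq, Set.mem_empty_iff_false, iff_false, not_and]
  intro hu hv
  rw [adj_iff h2 hf0] at hu hv
  obtain ⟨hcku, hγu⟩ := hu
  obtain ⟨hckv, hγv⟩ := hv
  rw [hγv] at hγu
  by_cases hij : i = j
  · subst hij
    have hab : a ≠ b := by
      intro h; subst h
      exact hbj rfl
    unfold nbrVal at hβ
    rw [if_pos rfl] at hβ
    dsimp at hβ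
    by_cases hk : k = i
    · subst hk
      unfold nbrVal at hγu
      rw [if_pos rfl, if_pos rfl] at hγu
      dsimp at hγu
      have hAA : a + a = 0 := by linear_combination a * h2
      have heq : f (a + a) + f (b + a) = f (a + c) + f (b + c) := by
        rw [hAA, hf0, add_comm b a]
        linear_combination hγu - hβ - (f (b + c) + f b) * h2
      rcases phi_fiber h2 hf hab heq with h | h
      · exact hcku (by rw [h])
      · exact hckv (by rw [h]; rw [show a + (a + b) = b by linear_combination a * h2])
    · unfold nbrVal at hγu
      rw [if_neg hk, if_neg hk] at hγu
      dsimp at hγu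
      apply phi_sumfree h2 hf hab a 0 c
      have hAA : a + a = 0 := by linear_combination a * h2
      rw [hAA, hf0, add_zero, add_zero, add_comm b a]
      linear_combination hγu - hβ - f (b + c) * h2
  · unfold nbrVal at hβ
    rw [if_neg (fun h => hij (by exact h.symm))] at hβ
    dsimp at hβ
    rcases zmod2_or (k := k) hij with hk | hk
    · subst hk
      unfold nbrVal at hγu
      rw [if_pos rfl, if_neg hij] at hγu
      dsimp at hγu
      have : c = a := by
        apply g_inj h2 hf a b
        show f (a + c) + f (b + c) + f c = f (a + a) + f (b + a) + f a
        rw [show a + a = 0 by linear_combination a * h2, hf0, add_comm b a]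
        linear_combination hβ - hγu + (f (b + c) - f a) * h2
      exact hcku (by rw [this])
    · subst hk
      unfold nbrVal at hγu
      rw [if_neg (fun h => hij (Eq.symm h)), if_pos rfl] at hγu
      dsimp at hγu
      have : c = b := by
        apply g_inj h2 hf a b
        show f (a + c) + f (b + c) + f c = f (a + b) + f (b + b) + f b
        rw [show b + b = 0 by linear_combination b * h2, hf0]
        linear_combination hβ - hγu + (f (b + c) + f c) * h2
      exact hckv (by rw [this])

lemma vert_ext {c c' : F} {k k' : ZMod 2} {γ γ' : F} (h1 : c = c') (h2 : k = k')
    (h3 : γ = γ') : (c, k, γ) = (c', k', γ') := by rw [h1, h2, h3]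

lemma CN_two [Fintype F] [DecidableEq F] (h2 : (2:F) = 0) (hf : IsCrooked f)
    {m : ℕ} (hcard : Fintype.card F = 2 ^ m) {u v : F × ZMod 2 × F}
    (hnadj : ¬ (crookedGraph f).Adj u v) (hclass : (u.1, u.2.1) ≠ (v.1, v.2.1)) :
    ∃ w₁ w₂, w₁ ≠ w₂ ∧ CN f u v = {w₁, w₂} := by
  have hf0 := hf.1
  obtain ⟨a, i, α⟩ := u
  obtain ⟨b, j, β⟩ := v
  by_cases hij : i = j
  · subst hij
    have hab : a ≠ b := fun h => hclass (by rw [h])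
    have habne : a + b ≠ 0 := fun h0 => hab (by linear_combination h0 - b * h2)
    have hnadjval : β ≠ α + f (a + b) + f a + f b := by
      intro h
      exact hnadj (adj_of_eq h2 hf0 (fun hh => hab (congrArg Prod.fst hh).symm)
        (show β = nbrVal f (a, i, α) b i by unfold nbrVal; rw [if_pos rfl]; exact h))
    have hs : ∃ c, f (a + c) + f (b + c) = f a + f b := ⟨0, by rw [add_zero, add_zero]⟩
    have hpart := phi_partition h2 hf hcard hab hs (α + β + f a + f b)
    have hval : α + β + f a + f b + (f a + f b) = α + β := by
      linear_combination (f a + f b) * h2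
    rw [hval] at hpart
    by_cases hcase : ∃ c, f (a + c) + f (b + c) = α + β + f a + f b
    · obtain ⟨c₀, hc₀⟩ := hcase
      have hnt : ¬∃ c, f (a + c) + f (b + c) = α + β :=
        hpart.mp ⟨c₀, hc₀⟩
      have hfab : f (a + a) + f (b + a) = f (a + b) := by
        rw [show a + a = 0 by linear_combination a * h2, hf0, add_comm b a, zero_add]
      have hfab' : f (a + b) + f (b + b) = f (a + b) := by
        rw [show b + b = 0 by linear_combination b * h2, hf0, add_zero]
      have hc₀a : c₀ ≠ a := by
        intro hh
        rw [hh, hfab] at hc₀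
        exact hnadjval (by linear_combination - hc₀ - (α + f a + f b) * h2)
      have hc₀b : c₀ ≠ b := by
        intro hh
        rw [hh, hfab'] at hc₀
        exact hnadjval (by linear_combination - hc₀ - (α + f a + f b) * h2)
      have hc₁ : f (a + (c₀ + (a + b))) + f (b + (c₀ + (a + b))) = α + β + f a + f b :=
        (phi_shift h2 a b c₀).trans hc₀
      have hc₁a : c₀ + (a + b) ≠ a := fun h => hc₀b (by linear_combination h - b * h2)
      have hc₁b : c₀ + (a + b) ≠ b := fun h => hc₀a (by linear_combination h - a * h2)
      refine ⟨(c₀, i, nbrVal f (a, i, α) c₀ i), (c₀ + (a + b), i, nbrVal f (a, i, α) (c₀ + (a + b)) i),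
        ?_, ?_⟩
      · intro h
        exact habne (by linear_combination - congrArg Prod.fst h)
      · have hadj1u : (crookedGraph f).Adj (a, i, α) (c₀, i, nbrVal f (a, i, α) c₀ i) :=
          adj_of_eq h2 hf0 (fun hh => hc₀a (congrArg Prod.fst hh)) rfl
        have hadj2u : (crookedGraph f).Adj (a, i, α)
            (c₀ + (a + b), i, nbrVal f (a, i, α) (c₀ + (a + b)) i) :=
          adj_of_eq h2 hf0 (fun hh => hc₁a (congrArg Prod.fst hh)) rfl
        have hnbr : ∀ c : F, f (a + c) + f (b + c) = α + β + f a + f b →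
            nbrVal f (a, i, α) c i = nbrVal f (b, i, β) c i := by
          intro c hc
          unfold nbrVal
          rw [if_pos rfl, if_pos rfl]
          dsimp
          linear_combination hc + (α + f a - f (b + c)) * h2
        have hadj1v : (crookedGraph f).Adj (b, i, β) (c₀, i, nbrVal f (a, i, α) c₀ i) :=
          adj_of_eq h2 hf0 (fun hh => hc₀b (congrArg Prod.fst hh)) (hnbr c₀ hc₀)
        have hadj2v : (crookedGraph f).Adj (b, i, β)
            (c₀ + (a + b), i, nbrVal f (a, i, α) (c₀ + (a + b)) i) :=
          adj_of_eq h2 hf0 (fun hh => hc₁b (congrArg Prod.fst hh)) (hnbr _ hc₁)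
        ext ⟨c, k, γ⟩
        simp only [CN, Set.mem_setOf_eq, Set.mem_insert_iff, Set.mem_singleton_iff]
        constructor
        · rintro ⟨hu, hv⟩
          rw [adj_iff h2 hf0] at hu hv
          obtain ⟨hcku, hγu⟩ := hu
          obtain ⟨hckv, hγv⟩ := hv
          have heqn := hγu.symm.trans hγv
          unfold nbrVal at heqn
          by_cases hk : k = i
          · rw [if_pos hk, if_pos hk] at heqn
            dsimp at heqn
            have heq : f (a + c₀) + f (b + c₀) = f (a + c) + f (b + c) := by
              rw [hc₀]
              linear_combination heqn + (β + f b - f (a + c)) * h2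
            rcases phi_fiber h2 hf hab heq with hcc | hcc
            · left; exact vert_ext hcc hk (by rw [hγu, hcc, hk])
            · right; exact vert_ext hcc hk (by rw [hγu, hcc, hk])
          · exfalso
            apply hnt
            rw [if_neg hk, if_neg hk] at heqn
            dsimp at heqn
            exact ⟨c, by linear_combination heqn + (f (b + c) - α) * h2⟩
        · rintro (h | h) <;> rw [h]
          · exact ⟨hadj1u, hadj1v⟩
          · exact ⟨hadj2u, hadj2v⟩
    · -- no solution for t' = α+β+fa+fb; then solutions for t = α+β with k = i+1
      have hex : ∃ c, f (a + c) + f (b + c) = α + β :=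
        not_not.mp (fun hB => hcase (hpart.mpr hB))
      obtain ⟨c₀, hc₀⟩ := hex
      have hc₁ : f (a + (c₀ + (a + b))) + f (b + (c₀ + (a + b))) = α + β :=
        (phi_shift h2 a b c₀).trans hc₀
      have hclassu : ∀ c : F, (c, i + 1) ≠ ((a, i, α).1, (a, i, α).2.1) :=
        fun c hh => zmod2_succ_ne i (congrArg Prod.snd hh)
      have hclassv : ∀ c : F, (c, i + 1) ≠ ((b, i, β).1, (b, i, β).2.1) :=
        fun c hh => zmod2_succ_ne i (congrArg Prod.snd hh)
      have hnbr : ∀ c : F, f (a + c) + f (b + c) = α + β →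
          nbrVal f (a, i, α) c (i + 1) = nbrVal f (b, i, β) c (i + 1) := by
        intro c hc
        unfold nbrVal
        rw [if_neg (zmod2_succ_ne i), if_neg (zmod2_succ_ne i)]
        dsimp
        linear_combination hc + (α - f (b + c)) * h2
      refine ⟨(c₀, i + 1, nbrVal f (a, i, α) c₀ (i + 1)),
        (c₀ + (a + b), i + 1, nbrVal f (a, i, α) (c₀ + (a + b)) (i + 1)), ?_, ?_⟩
      · intro h
        exact habne (by linear_combination - congrArg Prod.fst h)
      · ext ⟨c, k, γ⟩
        simp only [CN, Set.mem_setOf_eq, Set.mem_insert_iff, Set.mem_singleton_iff]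
        constructor
        · rintro ⟨hu, hv⟩
          rw [adj_iff h2 hf0] at hu hv
          obtain ⟨hcku, hγu⟩ := hu
          obtain ⟨hckv, hγv⟩ := hv
          have heqn := hγu.symm.trans hγv
          unfold nbrVal at heqn
          by_cases hk : k = i
          · exfalso
            apply hcase
            rw [if_pos hk, if_pos hk] at heqn
            dsimp at heqn
            exact ⟨c, by linear_combination heqn + (f (b + c) - α - f a) * h2⟩
          · have hk1 : k = i + 1 := zmod2_resolve hk
            rw [if_neg hk, if_neg hk] at heqn
            dsimp at heqn
            have heq : f (a + c₀) + f (b + c₀) = f (a + c) + f (b + c) := by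
              rw [hc₀]
              linear_combination heqn + (β - f (a + c)) * h2
            rcases phi_fiber h2 hf hab heq with hcc | hcc
            · left; exact vert_ext hcc hk1 (by rw [hγu, hcc, hk1])
            · right; exact vert_ext hcc hk1 (by rw [hγu, hcc, hk1])
        · rintro (h | h) <;> rw [h]
          · exact ⟨adj_of_eq h2 hf0 (hclassu c₀) rfl,
              adj_of_eq h2 hf0 (hclassv c₀) (hnbr c₀ hc₀)⟩
          · exact ⟨adj_of_eq h2 hf0 (hclassu _) rfl,
              adj_of_eq h2 hf0 (hclassv _) (hnbr _ hc₁)⟩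
  · -- i ≠ j
    have hg := g_inj h2 hf a b
    have hgbij : Function.Bijective (fun c => f (a + c) + f (b + c) + f c) :=
      Finite.injective_iff_bijective.mp hg
    obtain ⟨c₁, hc₁⟩ := hgbij.surjective (α + β + f a)
    obtain ⟨c₂, hc₂⟩ := hgbij.surjective (α + β + f b)
    dsimp at hc₁ hc₂
    have hji : ¬ (j = i) := fun h => hij h.symm
    have hnadjval : β ≠ α + f (a + b) := by
      intro h
      refine hnadj (adj_of_eq h2 hf0 (fun hh => hji (congrArg Prod.snd hh)) ?_)
      unfold nbrVal
      rw [if_neg hji]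
      exact h
    have hga : f (a + a) + f (b + a) + f a = f (a + b) + f a := by
      rw [show a + a = 0 by linear_combination a * h2, hf0, add_comm b a, zero_add]
    have hgb : f (a + b) + f (b + b) + f b = f (a + b) + f b := by
      rw [show b + b = 0 by linear_combination b * h2, hf0, add_zero]
    have hc₁a : c₁ ≠ a := by
      intro hh
      rw [hh, hga] at hc₁
      exact hnadjval (by linear_combination - hc₁ - α * h2)
    have hc₂b : c₂ ≠ b := by
      intro hh
      rw [hh, hgb] at hc₂
      exact hnadjval (by linear_combination - hc₂ - α * h2)
    have hnbr1 : nbrVal f (a, i, α) c₁ i = nbrVal f (b, j, β) c₁ i := by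
      unfold nbrVal
      rw [if_pos rfl, if_neg hij]
      dsimp
      linear_combination hc₁ + (α + f a - f (b + c₁)) * h2
    have hnbr2 : nbrVal f (a, i, α) c₂ j = nbrVal f (b, j, β) c₂ j := by
      unfold nbrVal
      rw [if_neg hji, if_pos rfl]
      dsimp
      linear_combination - hc₂ + (f (a + c₂) - β - f b) * h2
    refine ⟨(c₁, i, nbrVal f (a, i, α) c₁ i), (c₂, j, nbrVal f (a, i, α) c₂ j), ?_, ?_⟩
    · intro h
      exact hij (congrArg (Prod.fst ∘ Prod.snd) h)
    · ext ⟨c, k, γ⟩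
      simp only [CN, Set.mem_setOf_eq, Set.mem_insert_iff, Set.mem_singleton_iff]
      constructor
      · rintro ⟨hu, hv⟩
        rw [adj_iff h2 hf0] at hu hv
        obtain ⟨hcku, hγu⟩ := hu
        obtain ⟨hckv, hγv⟩ := hv
        have heqn := hγu.symm.trans hγv
        unfold nbrVal at heqn
        rcases zmod2_or (k := k) hij with hk | hk
        · left
          rw [if_pos hk, if_neg (fun hh : k = j => hij (hk.symm.trans hh))] at heqn
          dsimp at heqn
          have hcc : c = c₁ := by
            apply hg
            show f (a + c) + f (b + c) + f c = f (a + c₁) + f (b + c₁) + f c₁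
            rw [hc₁]
            linear_combination heqn + (f (b + c) - α - f a) * h2
          exact vert_ext hcc hk (by rw [hγu, hcc, hk])
        · right
          rw [if_neg (fun hh : k = i => hij (hh.symm.trans hk)), if_pos hk] at heqn
          dsimp at heqn
          have hcc : c = c₂ := by
            apply hg
            show f (a + c) + f (b + c) + f c = f (a + c₂) + f (b + c₂) + f c₂
            rw [hc₂]
            linear_combination heqn + (f (b + c) + f c - α) * h2
          exact vert_ext hcc hk (by rw [hγu, hcc, hk])
      · rintro (h | h) <;> rw [h]
        · exact ⟨adj_of_eq h2 hf0 (fun hh => hc₁a (congrArg Prod.fst hh)) rfl,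
            adj_of_eq h2 hf0 (fun hh => hij (congrArg Prod.snd hh)) hnbr1⟩
        · exact ⟨adj_of_eq h2 hf0 (fun hh => hji (congrArg Prod.snd hh)) rfl,
            adj_of_eq h2 hf0 (fun hh => hc₂b (congrArg Prod.fst hh)) hnbr2⟩

section DistGeneral
variable {V : Type*} {G : SimpleGraph V} {u v x y : V}

lemma exists_mid (h : G.dist u v = 2) : ∃ x, G.Adj u x ∧ G.Adj x v := by
  obtain ⟨p, hp⟩ := SimpleGraph.exists_walk_of_dist_ne_zero (show G.dist u v ≠ 0 by omega)
  rw [h] at hp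
  cases p with
  | nil => simp at hp
  | cons h1 q =>
    cases q with
    | nil => simp at hp
    | cons h2 r =>
      cases r with
      | nil => exact ⟨_, h1, h2⟩
      | cons h3 s => simp [SimpleGraph.Walk.length_cons] at hp

lemma dist_eq_two' (hne : u ≠ v) (hnadj : ¬G.Adj u v) (h1 : G.Adj u x) (h2 : G.Adj x v) :
    G.dist u v = 2 := by
  have hle : G.dist u v ≤ 2 := by
    have := SimpleGraph.dist_le (SimpleGraph.Walk.cons h1 (SimpleGraph.Walk.cons h2
      SimpleGraph.Walk.nil))
    simpa using this
  have hr : G.Reachable u v :=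
    ⟨SimpleGraph.Walk.cons h1 (SimpleGraph.Walk.cons h2 SimpleGraph.Walk.nil)⟩
  have h0 : G.dist u v ≠ 0 := fun h => hne (hr.dist_eq_zero_iff.mp h)
  have h1' : G.dist u v ≠ 1 := fun h => hnadj (SimpleGraph.dist_eq_one_iff_adj.mp h)
  omega

lemma dist_eq_three' (hne : u ≠ v) (hnadj : ¬G.Adj u v)
    (hmid : ∀ x, ¬(G.Adj u x ∧ G.Adj x v))
    (h1 : G.Adj u x) (h2 : G.Adj x y) (h3 : G.Adj y v) : G.dist u v = 3 := by
  have hle : G.dist u v ≤ 3 := by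
    have := SimpleGraph.dist_le (SimpleGraph.Walk.cons h1 (SimpleGraph.Walk.cons h2
      (SimpleGraph.Walk.cons h3 SimpleGraph.Walk.nil)))
    simpa using this
  have hr : G.Reachable u v :=
    ⟨SimpleGraph.Walk.cons h1 (SimpleGraph.Walk.cons h2 (SimpleGraph.Walk.cons h3
      SimpleGraph.Walk.nil))⟩
  have h0 : G.dist u v ≠ 0 := fun h => hne (hr.dist_eq_zero_iff.mp h)
  have h1' : G.dist u v ≠ 1 := fun h => hnadj (SimpleGraph.dist_eq_one_iff_adj.mp h)
  have h2' : G.dist u v ≠ 2 := by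
    intro h
    obtain ⟨z, hz⟩ := exists_mid h
    exact hmid z hz
  omega

end DistGeneral

lemma adj_succ (h2 : (2:F) = 0) (hf0 : f 0 = 0) (a : F) (i : ZMod 2) (α : F) :
    (crookedGraph f).Adj (a, i, α) (a, i + 1, α) := by
  apply adj_of_eq h2 hf0 (fun hh => zmod2_succ_ne i (congrArg Prod.snd hh))
  unfold nbrVal
  rw [if_neg (zmod2_succ_ne i)]
  dsimp
  rw [show a + a = 0 by linear_combination a * h2, hf0, add_zero]

lemma not_adj_classmates (h2 : (2:F) = 0) (hf0 : f 0 = 0) {u v : F × ZMod 2 × F}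
    (h1 : u.1 = v.1) (h21 : u.2.1 = v.2.1) : ¬ (crookedGraph f).Adj u v := by
  obtain ⟨a, i, α⟩ := u
  obtain ⟨b, j, β⟩ := v
  dsimp at h1 h21
  subst h1; subst h21
  rw [adj_iff h2 hf0]
  rintro ⟨hne, -⟩
  exact hne rfl

lemma dist_classmates [Fintype F] [DecidableEq F] (h2 : (2:F) = 0) (hf : IsCrooked f)
    {m : ℕ} (hcard : Fintype.card F = 2 ^ m) {u v : F × ZMod 2 × F}
    (h1 : u.1 = v.1) (h21 : u.2.1 = v.2.1) (hne : u ≠ v) :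
    (crookedGraph f).dist u v = 3 := by
  have hf0 := hf.1
  have hCN := CN_classmates (f := f) h2 hf0 h1 h21 hne
  obtain ⟨a, i, α⟩ := u
  obtain ⟨b, j, β⟩ := v
  dsimp at h1 h21
  subst h1; subst h21
  have hαβ : α ≠ β := fun h => hne (by rw [h])
  have hw : (crookedGraph f).Adj (a, i, α) (a, i + 1, α) := adj_succ h2 hf0 a i α
  have hwv : ¬ (crookedGraph f).Adj (a, i + 1, α) (a, i, β) := by
    rw [adj_iff h2 hf0]
    rintro ⟨-, hval⟩
    apply hαβ
    unfold nbrVal at hval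
    rw [if_neg (fun hh : i = i + 1 => zmod2_succ_ne i hh.symm)] at hval
    dsimp at hval
    rw [show a + a = 0 by linear_combination a * h2, hf0, add_zero] at hval
    exact hval.symm
  have hwne : ((a, i + 1, α) : F × ZMod 2 × F) ≠ (a, i, β) :=
    fun h => zmod2_succ_ne i (congrArg (Prod.fst ∘ Prod.snd) h)
  have hwclass : ((a : F), (i + 1 : ZMod 2)) ≠ ((a, i, β).1, (a, i, β).2.1) :=
    fun h => zmod2_succ_ne i (congrArg Prod.snd h)
  obtain ⟨w₁, w₂, -, hCN2⟩ := CN_two h2 hf hcard hwv hwclass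
  have hw₁ : w₁ ∈ CN f (a, i + 1, α) (a, i, β) := by rw [hCN2]; left; rfl
  refine dist_eq_three' hne (not_adj_classmates h2 hf0 rfl rfl) ?_ hw hw₁.1 hw₁.2.symm
  intro x hx
  rw [show (∅ : Set (F × ZMod 2 × F)) = ∅ from rfl] at hCN
  have : x ∈ CN f (a, i, α) (a, i, β) := ⟨hx.1, hx.2.symm⟩
  rw [hCN] at this
  exact this

lemma connected [Fintype F] [DecidableEq F] (h2 : (2:F) = 0) (hf : IsCrooked f)
    {m : ℕ} (hcard : Fintype.card F = 2 ^ m) : (crookedGraph f).Connected := by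
  have hf0 := hf.1
  rw [SimpleGraph.connected_iff]
  refine ⟨fun u v => ?_, inferInstance⟩
  by_cases heq : u = v
  · rw [heq]
  by_cases hadj : (crookedGraph f).Adj u v
  · exact hadj.reachable
  by_cases hclass : (u.1, u.2.1) = (v.1, v.2.1)
  · have hc1 : u.1 = v.1 := (Prod.ext_iff.mp hclass).1
    have hc2 : u.2.1 = v.2.1 := (Prod.ext_iff.mp hclass).2
    have h3 := dist_classmates h2 hf hcard hc1 hc2 heq
    exact SimpleGraph.Reachable.of_dist_ne_zero (by omega)
  · obtain ⟨w₁, w₂, -, hCN2⟩ := CN_two h2 hf hcard hadj hclass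
    have hw₁ : w₁ ∈ CN f u v := by rw [hCN2]; left; rfl
    exact hw₁.1.reachable.trans hw₁.2.reachable.symm

lemma dist_two [Fintype F] [DecidableEq F] (h2 : (2:F) = 0) (hf : IsCrooked f)
    {m : ℕ} (hcard : Fintype.card F = 2 ^ m) {u v : F × ZMod 2 × F}
    (hnadj : ¬ (crookedGraph f).Adj u v) (hclass : (u.1, u.2.1) ≠ (v.1, v.2.1)) :
    (crookedGraph f).dist u v = 2 := by
  have hne : u ≠ v := fun h => hclass (by rw [h])
  obtain ⟨w₁, w₂, -, hCN2⟩ := CN_two h2 hf hcard hnadj hclass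
  have hw₁ : w₁ ∈ CN f u v := by rw [hCN2]; left; rfl
  exact dist_eq_two' hne hnadj hw₁.1 hw₁.2.symm

lemma dist_three_iff [Fintype F] [DecidableEq F] (h2 : (2:F) = 0) (hf : IsCrooked f)
    {m : ℕ} (hcard : Fintype.card F = 2 ^ m) (u v : F × ZMod 2 × F) :
    (crookedGraph f).dist u v = 3 ↔ ((u.1, u.2.1) = (v.1, v.2.1) ∧ u ≠ v) := by
  constructor
  · intro h3
    have hne : u ≠ v := by
      intro h; rw [h, SimpleGraph.dist_self] at h3; exact absurd h3 (by omega)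
    refine ⟨?_, hne⟩
    by_contra hclass
    have hnadj : ¬ (crookedGraph f).Adj u v := by
      intro hadj
      rw [SimpleGraph.dist_eq_one_iff_adj.mpr hadj] at h3
      omega
    rw [dist_two h2 hf hcard hnadj hclass] at h3
    omega
  · rintro ⟨hclass, hne⟩
    exact dist_classmates h2 hf hcard ((Prod.ext_iff.mp hclass).1)
      ((Prod.ext_iff.mp hclass).2) hne

lemma dist_two_iff [Fintype F] [DecidableEq F] (h2 : (2:F) = 0) (hf : IsCrooked f)
    {m : ℕ} (hcard : Fintype.card F = 2 ^ m) (u v : F × ZMod 2 × F) :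
    (crookedGraph f).dist u v = 2 ↔
      (¬ (crookedGraph f).Adj u v ∧ (u.1, u.2.1) ≠ (v.1, v.2.1)) := by
  constructor
  · intro hd
    have hne : u ≠ v := by
      intro h; rw [h, SimpleGraph.dist_self] at hd; exact absurd hd (by omega)
    have hnadj : ¬ (crookedGraph f).Adj u v := by
      intro hadj
      rw [SimpleGraph.dist_eq_one_iff_adj.mpr hadj] at hd
      omega
    refine ⟨hnadj, fun hclass => ?_⟩
    rw [dist_classmates h2 hf hcard ((Prod.ext_iff.mp hclass).1)
      ((Prod.ext_iff.mp hclass).2) hne] at hd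
    omega
  · rintro ⟨hnadj, hclass⟩
    exact dist_two h2 hf hcard hnadj hclass

lemma dist_zero_iff [Fintype F] [DecidableEq F] (h2 : (2:F) = 0) (hf : IsCrooked f)
    {m : ℕ} (hcard : Fintype.card F = 2 ^ m) (u v : F × ZMod 2 × F) :
    (crookedGraph f).dist u v = 0 ↔ u = v :=
  (connected h2 hf hcard).dist_eq_zero_iff

lemma dist_le_three [Fintype F] [DecidableEq F] (h2 : (2:F) = 0) (hf : IsCrooked f)
    {m : ℕ} (hcard : Fintype.card F = 2 ^ m) (u v : F × ZMod 2 × F) :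
    (crookedGraph f).dist u v ≤ 3 := by
  by_cases heq : u = v
  · rw [heq, SimpleGraph.dist_self]; omega
  by_cases hadj : (crookedGraph f).Adj u v
  · rw [SimpleGraph.dist_eq_one_iff_adj.mpr hadj]; omega
  by_cases hclass : (u.1, u.2.1) = (v.1, v.2.1)
  · rw [(dist_three_iff h2 hf hcard u v).mpr ⟨hclass, heq⟩]
  · rw [dist_two h2 hf hcard hadj hclass]; omega

lemma adj_class_ne (h2 : (2:F) = 0) (hf0 : f 0 = 0) {v w : F × ZMod 2 × F}
    (h : (crookedGraph f).Adj v w) : (w.1, w.2.1) ≠ (v.1, v.2.1) := by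
  obtain ⟨c, k, γ⟩ := w
  rw [adj_iff h2 hf0] at h
  exact h.1

lemma nbr_unique (h2 : (2:F) = 0) (hf0 : f 0 = 0) {v w w' : F × ZMod 2 × F}
    (hw : (crookedGraph f).Adj v w) (hw' : (crookedGraph f).Adj v w')
    (h1 : w.1 = w'.1) (h21 : w.2.1 = w'.2.1) : w = w' := by
  obtain ⟨c, k, γ⟩ := w
  obtain ⟨c', k', γ'⟩ := w'
  dsimp at h1 h21
  subst h1; subst h21
  rw [adj_iff h2 hf0] at hw hw'
  exact vert_ext rfl rfl (hw.2.trans hw'.2.symm)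

lemma nbhd_ncard [Fintype F] [DecidableEq F] (h2 : (2:F) = 0) (hf0 : f 0 = 0)
    {m : ℕ} (hcard : Fintype.card F = 2 ^ m) (v : F × ZMod 2 × F) :
    {w | (crookedGraph f).Adj v w}.ncard = 2 ^ (m + 1) - 1 := by
  have hset : {w | (crookedGraph f).Adj v w} =
      (fun p : F × ZMod 2 => (p.1, p.2, nbrVal f v p.1 p.2)) ''
        {p : F × ZMod 2 | p ≠ (v.1, v.2.1)} := by
    ext ⟨c, k, γ⟩
    simp only [Set.mem_setOf_eq, Set.mem_image]
    rw [adj_iff h2 hf0]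
    constructor
    · rintro ⟨hck, hγ⟩
      exact ⟨(c, k), hck, by rw [hγ]⟩
    · rintro ⟨⟨c', k'⟩, hck, heq⟩
      obtain ⟨e1, heq2⟩ := Prod.ext_iff.mp heq
      obtain ⟨e2, e3⟩ := Prod.ext_iff.mp heq2
      dsimp at e1 e2 e3 hck
      subst e1; subst e2
      exact ⟨hck, e3.symm⟩
  rw [hset, Set.ncard_image_of_injective _ (fun p q h => ?_)]
  · have hsd : {p : F × ZMod 2 | p ≠ (v.1, v.2.1)} = Set.univ \ {(v.1, v.2.1)} := by
      ext p; simp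
    rw [hsd, Set.ncard_diff (Set.subset_univ _), Set.ncard_univ, Set.ncard_singleton]
    rw [Nat.card_eq_fintype_card, Fintype.card_prod, hcard, ZMod.card 2, pow_succ]
  · obtain ⟨e1, heq2⟩ := Prod.ext_iff.mp h
    obtain ⟨e2, -⟩ := Prod.ext_iff.mp heq2
    exact Prod.ext e1 e2

lemma two_eq_zero [Fintype F] {m : ℕ} (hcard : Fintype.card F = 2 ^ m) : (2 : F) = 0 := by
  have hp : CharP F (ringChar F) := ringChar.charP F
  obtain ⟨n, hprime, hc⟩ := FiniteField.card F (ringChar F)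
  have hdvd : ringChar F ∣ 2 ^ m := by
    rw [← hcard, hc]
    exact dvd_pow_self _ (Nat.pos_iff_ne_zero.mp n.pos)
  have h2 : ringChar F = 2 :=
    (Nat.prime_dvd_prime_iff_eq hprime Nat.prime_two).mp (hprime.dvd_of_dvd_pow hdvd)
  have := CharP.cast_eq_zero F (ringChar F)
  rw [h2] at this
  exact_mod_cast this

end CrookedAux

open CrookedAux in
/-- If `f` is crooked then `G_f` is an antipodal distance-regular graph of
diameter `3` with intersection array
`{2^(m+1) - 1, 2^(m+1) - 2, 1; 1, 2, 2^(m+1) - 1}`. -/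
theorem crookedGraph_distance_regular {m : ℕ} (hm : 0 < m) (hmodd : Odd m)
    {F : Type*} [Field F] [Fintype F] (hcard : Fintype.card F = 2 ^ m)
    (f : F → F) (hf : IsCrooked f) :
    (crookedGraph f).Connected ∧
    (∀ u v : F × ZMod 2 × F, (crookedGraph f).dist u v ≤ 3) ∧
    (∀ u v : F × ZMod 2 × F, (crookedGraph f).dist u v = 0 →
      {w | (crookedGraph f).Adj v w ∧ (crookedGraph f).dist u w = 1}.ncard =
        2 ^ (m + 1) - 1) ∧
    (∀ u v : F × ZMod 2 × F, (crookedGraph f).dist u v = 1 →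
      {w | (crookedGraph f).Adj v w ∧ (crookedGraph f).dist u w = 2}.ncard =
        2 ^ (m + 1) - 2 ∧
      {w | (crookedGraph f).Adj v w ∧ (crookedGraph f).dist u w = 0}.ncard = 1) ∧
    (∀ u v : F × ZMod 2 × F, (crookedGraph f).dist u v = 2 →
      {w | (crookedGraph f).Adj v w ∧ (crookedGraph f).dist u w = 3}.ncard = 1 ∧
      {w | (crookedGraph f).Adj v w ∧ (crookedGraph f).dist u w = 1}.ncard = 2) ∧
    (∀ u v : F × ZMod 2 × F, (crookedGraph f).dist u v = 3 →
      {w | (crookedGraph f).Adj v w ∧ (crookedGraph f).dist u w = 2}.ncard =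
        2 ^ (m + 1) - 1) ∧
    Equivalence (fun u v : F × ZMod 2 × F =>
      u = v ∨ (crookedGraph f).dist u v = 3) := by
  classical
  have h2 : (2 : F) = 0 := two_eq_zero hcard
  have hf0 : f 0 = 0 := hf.1
  refine ⟨connected h2 hf hcard, fun u v => dist_le_three h2 hf hcard u v, ?_, ?_, ?_, ?_, ?_⟩
  · -- dist 0
    intro u v hd
    obtain rfl : u = v := (dist_zero_iff h2 hf hcard u v).mp hd
    have hset : {w | (crookedGraph f).Adj u w ∧ (crookedGraph f).dist u w = 1} =
        {w | (crookedGraph f).Adj u w} := by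
      ext w
      simp only [Set.mem_setOf_eq, SimpleGraph.dist_eq_one_iff_adj, and_self]
    rw [hset]
    exact nbhd_ncard h2 hf0 hcard u
  · -- dist 1
    intro u v hd
    have hadj : (crookedGraph f).Adj u v := SimpleGraph.dist_eq_one_iff_adj.mp hd
    have hCN := CN_adj h2 hf hadj
    constructor
    · have hset : {w | (crookedGraph f).Adj v w ∧ (crookedGraph f).dist u w = 2} =
          {w | (crookedGraph f).Adj v w} \ {u} := by
        ext w
        simp only [Set.mem_setOf_eq, Set.mem_diff, Set.mem_singleton_iff]
        constructor
        · rintro ⟨hvw, hd2⟩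
          refine ⟨hvw, fun h => ?_⟩
          rw [h, SimpleGraph.dist_self] at hd2
          exact absurd hd2 (by omega)
        · rintro ⟨hvw, hwu⟩
          refine ⟨hvw, (dist_two_iff h2 hf hcard u w).mpr ⟨?_, ?_⟩⟩
          · intro h
            have hmem : w ∈ CN f u v := ⟨h, hvw⟩
            rw [hCN] at hmem
            exact hmem
          · intro hcl
            exact hwu (nbr_unique h2 hf0 hvw hadj.symm
              (Prod.ext_iff.mp hcl).1.symm (Prod.ext_iff.mp hcl).2.symm)
      rw [hset, Set.ncard_diff_singleton_of_mem
        (show u ∈ {w | (crookedGraph f).Adj v w} from hadj.symm),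
        nbhd_ncard h2 hf0 hcard v]
      omega
    · have hset : {w | (crookedGraph f).Adj v w ∧ (crookedGraph f).dist u w = 0} =
          {u} := by
        ext w
        simp only [Set.mem_setOf_eq, Set.mem_singleton_iff]
        constructor
        · rintro ⟨hvw, h0⟩
          exact ((dist_zero_iff h2 hf hcard u w).mp h0).symm
        · rintro rfl
          exact ⟨hadj.symm, SimpleGraph.dist_self⟩
      rw [hset]
      exact Set.ncard_singleton u
  · -- dist 2
    intro u v hd
    obtain ⟨hnadj, hclass⟩ := (dist_two_iff h2 hf hcard u v).mp hd
    constructor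
    · have hadjw₀ : (crookedGraph f).Adj v (u.1, u.2.1, nbrVal f v u.1 u.2.1) :=
        adj_of_eq h2 hf0 hclass rfl
      have hw₀u : ((u.1, u.2.1, nbrVal f v u.1 u.2.1) : F × ZMod 2 × F) ≠ u := by
        intro h
        exact hnadj (h ▸ hadjw₀).symm
      have hd3 : (crookedGraph f).dist u (u.1, u.2.1, nbrVal f v u.1 u.2.1) = 3 :=
        (dist_three_iff h2 hf hcard u _).mpr ⟨rfl, fun hh => hw₀u hh.symm⟩
      have hset : {w | (crookedGraph f).Adj v w ∧ (crookedGraph f).dist u w = 3} =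
          {(u.1, u.2.1, nbrVal f v u.1 u.2.1)} := by
        ext w
        simp only [Set.mem_setOf_eq, Set.mem_singleton_iff]
        constructor
        · rintro ⟨hvw, hw3⟩
          obtain ⟨hcl, -⟩ := (dist_three_iff h2 hf hcard u w).mp hw3
          exact nbr_unique h2 hf0 hvw hadjw₀
            (Prod.ext_iff.mp hcl).1.symm (Prod.ext_iff.mp hcl).2.symm
        · rintro rfl
          exact ⟨hadjw₀, hd3⟩
      rw [hset]
      exact Set.ncard_singleton _
    · obtain ⟨w₁, w₂, hne12, hCN2⟩ := CN_two h2 hf hcard hnadj hclass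
      have hset : {w | (crookedGraph f).Adj v w ∧ (crookedGraph f).dist u w = 1} =
          CN f u v := by
        ext w
        simp only [Set.mem_setOf_eq, SimpleGraph.dist_eq_one_iff_adj, CN]
        exact and_comm
      rw [hset, hCN2]
      exact Set.ncard_pair hne12
  · -- dist 3
    intro u v hd
    obtain ⟨hclass, hne⟩ := (dist_three_iff h2 hf hcard u v).mp hd
    have hCN := CN_classmates (f := f) h2 hf0 (Prod.ext_iff.mp hclass).1
      (Prod.ext_iff.mp hclass).2 hne
    have hset : {w | (crookedGraph f).Adj v w ∧ (crookedGraph f).dist u w = 2} =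
        {w | (crookedGraph f).Adj v w} := by
      ext w
      simp only [Set.mem_setOf_eq]
      constructor
      · exact fun h => h.1
      · intro hvw
        refine ⟨hvw, (dist_two_iff h2 hf hcard u w).mpr ⟨?_, ?_⟩⟩
        · intro h
          have hmem : w ∈ CN f u v := ⟨h, hvw⟩
          rw [hCN] at hmem
          exact hmem
        · intro hcl
          exact adj_class_ne h2 hf0 hvw (hcl.symm.trans hclass)
    rw [hset]
    exact nbhd_ncard h2 hf0 hcard v
  · -- equivalence
    have hrel : ∀ u v : F × ZMod 2 × F,
        (u = v ∨ (crookedGraph f).dist u v = 3) ↔ (u.1, u.2.1) = (v.1, v.2.1) := by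
      intro u v
      constructor
      · rintro (rfl | h3)
        · rfl
        · exact ((dist_three_iff h2 hf hcard u v).mp h3).1
      · intro hclass
        by_cases h : u = v
        · exact Or.inl h
        · exact Or.inr ((dist_three_iff h2 hf hcard u v).mpr ⟨hclass, h⟩)
    exact ⟨fun u => Or.inl rfl,
      fun {u v} h => (hrel v u).mpr ((hrel u v).mp h).symm,
      fun {u v w} h h' => (hrel u w).mpr (((hrel u v).mp h).trans ((hrel v w).mp h'))⟩
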